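/- Let d be an even positive integer and let m be an integer with 1 ≤ m ≤ d/2 + 1. Then there exists a collection of at least (1/2)·binom(d, d/2 + m − 1) pairwise vertex-disjoint chains in {0,1}^d, each chain consisting of m points x_1 ≺ x_2 ≺ ⋯ ≺ x_m with Hamming weights |x_ℓ| = d/2 + ℓ − 1 for ℓ = 1,…,m (so consecutive points of each chain differ in exactly one coordinate); pairwise vertex-disjoint means no point of {0,1}^d lies on two of the chains. -/

import Mathlib

open Finset

abbrev Cube (d : ℕ) := Fin d → Bool

/-- Hamming weight. -/
def wt {d : ℕ} (x : Cube d) : ℕ := (Finset.univ.filter fun i => x i = true).card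

namespace SC19

variable {d : ℕ}

def g (x : Cube d) (j : ℕ) : ℤ :=
  ∑ i ∈ Finset.univ.filter (fun i : Fin d => (i : ℕ) < j), (if x i then (1 : ℤ) else -1)

lemma g_zero (x : Cube d) : g x 0 = 0 := by simp [g]

lemma g_succ (x : Cube d) (i : Fin d) :
    g x ((i : ℕ) + 1) = g x (i : ℕ) + (if x i then 1 else -1) := by
  have h : (Finset.univ.filter (fun j : Fin d => (j : ℕ) < (i : ℕ) + 1))
      = insert i (Finset.univ.filter (fun j : Fin d => (j : ℕ) < (i : ℕ))) := by
    ext j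
    simp only [Finset.mem_insert, Finset.mem_filter, Finset.mem_univ, true_and, Fin.ext_iff]
    omega
  simp only [g]
  rw [h, Finset.sum_insert (by simp), add_comm]

lemma g_d (x : Cube d) : g x d = 2 * (wt x : ℤ) - d := by
  have h : (Finset.univ.filter (fun j : Fin d => (j : ℕ) < d)) = Finset.univ := by
    ext j; simp [j.isLt]
  have h2 : ∀ i : Fin d, (if x i then (1:ℤ) else -1)
      = 2 * (if x i = true then (1:ℤ) else 0) - 1 := by
    intro i; by_cases h : x i <;> simp [h]
  simp only [g, h]
  rw [Finset.sum_congr rfl (fun i _ => h2 i), Finset.sum_sub_distrib, ← Finset.mul_sum,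
    Finset.sum_boole]
  simp [wt, Finset.card_univ]

def M (x : Cube d) : ℤ := ((Finset.range (d+1)).image (g x)).min' (by simp)

lemma M_le (x : Cube d) {j : ℕ} (hj : j ≤ d) : M x ≤ g x j :=
  Finset.min'_le _ _ (Finset.mem_image.2 ⟨j, Finset.mem_range.2 (by omega), rfl⟩)

lemma M_nonpos (x : Cube d) : M x ≤ 0 := by
  have := M_le x (Nat.zero_le d)
  rwa [g_zero] at this

lemma P_nonempty (x : Cube d) :
    ((Finset.range (d+1)).filter (fun j => g x j = M x)).Nonempty := by
  have h := Finset.min'_mem ((Finset.range (d+1)).image (g x)) (by simp)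
  rw [Finset.mem_image] at h
  obtain ⟨j, hj, hgj⟩ := h
  exact ⟨j, Finset.mem_filter.2 ⟨hj, hgj⟩⟩

/-- last index achieving the minimum of prefix sums -/
def p (x : Cube d) : ℕ :=
  (((Finset.range (d+1)).filter (fun j => g x j = M x))).max' (P_nonempty x)

lemma p_le (x : Cube d) : p x ≤ d := by
  have h := Finset.max'_mem _ (P_nonempty x)
  simp only [Finset.mem_filter, Finset.mem_range] at h
  exact Nat.lt_succ_iff.mp h.1

lemma g_p (x : Cube d) : g x (p x) = M x :=
  (Finset.mem_filter.mp (Finset.max'_mem _ (P_nonempty x))).2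

lemma lt_of_gt_p (x : Cube d) {j : ℕ} (hj : j ≤ d) (h : p x < j) : M x < g x j := by
  rcases lt_or_eq_of_le (M_le x hj) with h' | h'
  · exact h'
  · exfalso
    have : j ≤ p x := Finset.le_max' _ j
      (Finset.mem_filter.2 ⟨Finset.mem_range.2 (by omega), h'.symm⟩)
    omega

lemma p_lt (x : Cube d) (hx : 0 < g x d) : p x < d := by
  rcases lt_or_eq_of_le (p_le x) with h | h
  · exact h
  · exfalso
    have h1 := g_p x
    have h2 := M_nonpos x
    rw [h] at h1
    omega

/-- the index of p as Fin d -/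
def pf (x : Cube d) (hx : 0 < g x d) : Fin d := ⟨p x, p_lt x hx⟩

lemma x_pf (x : Cube d) (hx : 0 < g x d) : x (pf x hx) = true := by
  have hs := g_succ x (pf x hx)
  have hp : ((pf x hx : Fin d) : ℕ) = p x := rfl
  rw [hp, g_p] at hs
  have hlt := lt_of_gt_p x (j := p x + 1) (by have := p_lt x hx; omega) (by omega)
  by_contra h
  simp only [Bool.not_eq_true] at h
  rw [h] at hs
  simp at hs
  omega

lemma g_succ_p (x : Cube d) (hx : 0 < g x d) : g x (p x + 1) = M x + 1 := by
  have hs := g_succ x (pf x hx)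
  rw [x_pf x hx] at hs
  have hp : ((pf x hx : Fin d) : ℕ) = p x := rfl
  rw [hp, g_p] at hs
  simpa using hs

/-- down map: flip the 1 at position p to 0 -/
def D (x : Cube d) : Cube d := fun i => if (i : ℕ) = p x then false else x i

lemma g_D (x : Cube d) (hx : 0 < g x d) (j : ℕ) :
    g (D x) j = g x j - (if p x < j then 2 else 0) := by
  have key : ∀ i : Fin d, (if D x i then (1:ℤ) else -1)
      = (if x i then (1:ℤ) else -1) - (if i = pf x hx then 2 else 0) := by
    intro i
    by_cases h : i = pf x hx
    · subst h
      have hxp : x ⟨p x, p_lt x hx⟩ = true := x_pf x hx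
      simp [D, pf, hxp]
    · have h' : ((i : ℕ) ≠ p x) := by
        intro hc; exact h (Fin.ext hc)
      simp [D, h', h]
  simp only [g]
  rw [Finset.sum_congr rfl (fun i _ => key i), Finset.sum_sub_distrib,
    Finset.sum_ite_eq' _ (pf x hx) (fun _ => (2:ℤ))]
  have : pf x hx ∈ Finset.univ.filter (fun i : Fin d => (i : ℕ) < j) ↔ p x < j := by
    simp [pf]
  by_cases h : p x < j <;> simp [this, h]

lemma M_D (x : Cube d) (hx : 0 < g x d) : M (D x) = M x - 1 := by
  have hpd := p_lt x hx
  have h1 : g (D x) (p x + 1) = M x - 1 := by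
    rw [g_D x hx, g_succ_p x hx]
    simp only [if_pos (Nat.lt_succ_self _)]
    ring
  have hub : M (D x) ≤ M x - 1 := by
    rw [← h1]; exact M_le _ (by omega)
  have hlb : ∀ j ≤ d, M x - 1 ≤ g (D x) j := by
    intro j hj
    rw [g_D x hx]
    by_cases h : p x < j
    · have := lt_of_gt_p x hj h
      simp [h]; omega
    · have := M_le x hj
      simp [h]; omega
  have := Finset.min'_mem ((Finset.range (d+1)).image (g (D x))) (by simp)
  rw [Finset.mem_image] at this
  obtain ⟨j, hj, hgj⟩ := this
  have := hlb j (by simpa using Nat.lt_succ_iff.mp (Finset.mem_range.mp hj))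
  rw [hgj] at this
  have : M x - 1 ≤ M (D x) := this
  omega

/-- first index achieving the minimum -/
def q (x : Cube d) : ℕ :=
  (((Finset.range (d+1)).filter (fun j => g x j = M x))).min' (P_nonempty x)

lemma q_D (x : Cube d) (hx : 0 < g x d) : q (D x) = p x + 1 := by
  have hpd := p_lt x hx
  have h1 : g (D x) (p x + 1) = M (D x) := by
    rw [g_D x hx, g_succ_p x hx, M_D x hx]
    simp only [if_pos (Nat.lt_succ_self _)]
    ring
  have hle : q (D x) ≤ p x + 1 := Finset.min'_le _ _
    (Finset.mem_filter.2 ⟨Finset.mem_range.2 (by omega), h1⟩)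
  have hq1 : q (D x) ≤ d := by
    have h := Finset.min'_mem _ (P_nonempty (D x))
    simp only [Finset.mem_filter, Finset.mem_range] at h
    exact Nat.lt_succ_iff.mp h.1
  have hq2 : g (D x) (q (D x)) = M (D x) :=
    (Finset.mem_filter.mp (Finset.min'_mem _ (P_nonempty (D x)))).2
  have hge : p x + 1 ≤ q (D x) := by
    by_contra h
    push_neg at h
    have hqle : q (D x) ≤ p x := by omega
    have : g (D x) (q (D x)) = g x (q (D x)) := by
      rw [g_D x hx]
      simp [Nat.not_lt.2 hqle]
    rw [this] at hq2
    have := M_le x (j := q (D x)) (by omega)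
    rw [hq2, M_D x hx] at this
    omega
  omega

lemma D_recover (x : Cube d) (hx : 0 < g x d) :
    x = fun i : Fin d => if (i : ℕ) = q (D x) - 1 then true else D x i := by
  have hq := q_D x hx
  funext i
  by_cases h : (i : ℕ) = p x
  · have hxi : x i = true := by
      have hh : i = pf x hx := Fin.ext h
      rw [hh]; exact x_pf x hx
    simp [hq, h, hxi]
  · simp [hq, h, D]

lemma D_inj {x x' : Cube d} (hx : 0 < g x d) (hx' : 0 < g x' d) (h : D x = D x') :
    x = x' := by
  rw [D_recover x hx, D_recover x' hx', h]

lemma wt_D (x : Cube d) (hx : 0 < g x d) : wt (D x) + 1 = wt x := by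
  have hfil : (Finset.univ.filter fun i => D x i = true)
      = (Finset.univ.filter fun i => x i = true).erase (pf x hx) := by
    ext i
    simp only [Finset.mem_erase, Finset.mem_filter, Finset.mem_univ, true_and, D]
    constructor
    · intro hi
      by_cases h : (i : ℕ) = p x
      · simp [h] at hi
      · simp [h] at hi
        exact ⟨fun hc => h (by rw [hc]; rfl), hi⟩
    · intro ⟨h1, h2⟩
      have h : (i : ℕ) ≠ p x := fun hc => h1 (Fin.ext hc)
      simp [h, h2]
  have hmem : pf x hx ∈ (Finset.univ.filter fun i => x i = true) := by
    simp [x_pf x hx]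
  simp only [wt, hfil]
  rw [Finset.card_erase_of_mem hmem]
  have : 0 < (Finset.univ.filter fun i => x i = true).card := Finset.card_pos.2 ⟨_, hmem⟩
  omega

lemma D_lt (x : Cube d) (hx : 0 < g x d) : D x < x := by
  rw [lt_iff_le_and_ne]
  constructor
  · intro i
    by_cases h : (i : ℕ) = p x
    · simp [D, h]
    · simp [D, h]
  · intro h
    have := congrFun h (pf x hx)
    rw [x_pf x hx] at this
    simp [D, pf] at this

lemma g_pos_of_wt (he : Even d) (x : Cube d) (h : d / 2 < wt x) : 0 < g x d := by
  have h1 := g_d x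
  have h2 : d % 2 = 0 := Nat.even_iff.mp he
  omega

lemma iter_wt (he : Even d) : ∀ (k : ℕ) (x : Cube d), d / 2 + k ≤ wt x →
    wt (D^[k] x) + k = wt x := by
  intro k
  induction k with
  | zero => intro x _; simp
  | succ k ih =>
    intro x hx
    rw [Function.iterate_succ_apply]
    have hg : 0 < g x d := g_pos_of_wt he x (by omega)
    have hw := wt_D x hg
    have := ih (D x) (by omega)
    omega

lemma iter_lt (he : Even d) : ∀ (k : ℕ) (x : Cube d), 0 < k → d / 2 + k ≤ wt x →
    D^[k] x < x := by
  intro k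
  induction k with
  | zero => intro x h; omega
  | succ k ih =>
    intro x _ hx
    have hg : 0 < g x d := g_pos_of_wt he x (by omega)
    rw [Function.iterate_succ_apply]
    rcases Nat.eq_zero_or_pos k with hk | hk
    · subst hk; simpa using D_lt x hg
    · have hw := wt_D x hg
      exact lt_trans (ih (D x) hk (by omega)) (D_lt x hg)

lemma iter_inj (he : Even d) : ∀ (k : ℕ) (x x' : Cube d), d / 2 + k ≤ wt x →
    wt x' = wt x → D^[k] x = D^[k] x' → x = x' := by
  intro k
  induction k with
  | zero => intro x x' _ _ h; simpa using h
  | succ k ih =>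
    intro x x' hx hww h
    have hg : 0 < g x d := g_pos_of_wt he x (by omega)
    have hg' : 0 < g x' d := g_pos_of_wt he x' (by omega)
    have hw := wt_D x hg
    have hw' := wt_D x' hg'
    rw [Function.iterate_succ_apply, Function.iterate_succ_apply] at h
    have := ih (D x) (D x') (by omega) (by omega) h
    exact D_inj hg hg' this

lemma card_wt (d k : ℕ) :
    (Finset.univ.filter (fun x : Cube d => wt x = k)).card = d.choose k := by
  have hpc : d.choose k = (Finset.powersetCard k (Finset.univ : Finset (Fin d))).card := by
    rw [Finset.card_powersetCard, Finset.card_univ, Fintype.card_fin]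
  rw [hpc]
  apply Finset.card_bij' (fun x _ => Finset.univ.filter (fun i => x i = true))
    (fun s _ => fun i => decide (i ∈ s))
  · intro x hx
    funext i
    simp
  · intro s hs
    ext i
    simp
  · intro x hx
    simp only [Finset.mem_filter, Finset.mem_univ, true_and] at hx
    rw [Finset.mem_powersetCard]
    exact ⟨Finset.subset_univ _, hx⟩
  · intro s hs
    rw [Finset.mem_powersetCard] at hs
    rw [Finset.mem_filter]
    simp only [Finset.mem_univ, true_and, wt]
    have hfil : Finset.univ.filter (fun i => decide (i ∈ s) = true) = s := by
      ext i; simp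
    rw [hfil]
    exact hs.2

end SC19

theorem stmt19 (d m : ℕ) (hd : 0 < d) (hdeven : Even d) (hm : 1 ≤ m)
    (hm2 : m ≤ d / 2 + 1) :
    ∃ 𝒞 : Finset (Fin m → Cube d),
      Nat.choose d (d / 2 + m - 1) ≤ 2 * 𝒞.card ∧
      (∀ c ∈ 𝒞, StrictMono c ∧ ∀ ℓ : Fin m, wt (c ℓ) = d / 2 + (ℓ : ℕ)) ∧
      (∀ c ∈ 𝒞, ∀ c' ∈ 𝒞, c ≠ c' → ∀ i j, c i ≠ c' j) := by
  classical
  set T : Finset (Cube d) := Finset.univ.filter (fun x => wt x = d / 2 + m - 1) with hT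
  set chain : Cube d → (Fin m → Cube d) := fun x ℓ => SC19.D^[m - 1 - (ℓ : ℕ)] x with hchain
  have chain_top : ∀ x : Cube d, chain x ⟨m - 1, by omega⟩ = x := by
    intro x
    simp [hchain]
  have hwtx : ∀ x ∈ T, wt x = d / 2 + m - 1 := by
    intro x hx
    simp only [hT, Finset.mem_filter] at hx
    exact hx.2
  have hwt_chain : ∀ x ∈ T, ∀ ℓ : Fin m, wt (chain x ℓ) = d / 2 + (ℓ : ℕ) := by
    intro x hx ℓ
    have hwx := hwtx x hx
    have hℓ := ℓ.isLt
    have := SC19.iter_wt hdeven (m - 1 - (ℓ : ℕ)) x (by omega)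
    simp only [hchain]
    omega
  refine ⟨T.image chain, ?_, ?_, ?_⟩
  · have hinj : Set.InjOn chain T := by
      intro x hx y hy h
      have := congrFun h ⟨m - 1, by omega⟩
      rwa [chain_top, chain_top] at this
    rw [Finset.card_image_of_injOn hinj, hT, SC19.card_wt]
    omega
  · intro c hc
    rw [Finset.mem_image] at hc
    obtain ⟨x, hx, rfl⟩ := hc
    refine ⟨?_, hwt_chain x hx⟩
    intro ℓ ℓ' hlt
    have hℓ' := ℓ'.isLt
    have hsplit : m - 1 - (ℓ : ℕ) = (ℓ' - ℓ : ℕ) + (m - 1 - (ℓ' : ℕ)) := by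
      have : (ℓ : ℕ) < (ℓ' : ℕ) := hlt
      omega
    have heq : chain x ℓ = SC19.D^[(ℓ' : ℕ) - (ℓ : ℕ)] (chain x ℓ') := by
      simp only [hchain]
      rw [hsplit, Function.iterate_add_apply]
    rw [heq]
    apply SC19.iter_lt hdeven
    · have : (ℓ : ℕ) < (ℓ' : ℕ) := hlt
      omega
    · rw [hwt_chain x hx ℓ']
      omega
  · intro c hc c' hc' hne i j heq
    rw [Finset.mem_image] at hc hc'
    obtain ⟨x, hx, rfl⟩ := hc
    obtain ⟨x', hx', rfl⟩ := hc'
    have hij : (i : ℕ) = (j : ℕ) := by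
      have h1 := hwt_chain x hx i
      have h2 := hwt_chain x' hx' j
      rw [heq] at h1
      omega
    have hij' : i = j := Fin.ext hij
    subst hij'
    have hxx : x = x' := by
      apply SC19.iter_inj hdeven (m - 1 - (i : ℕ)) x x'
      · have := hwtx x hx
        have := i.isLt
        omega
      · rw [hwtx x hx, hwtx x' hx']
      · simpa only [hchain] using heq
    exact hne (by rw [hxx])
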